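/- Assume b ≤ ω₁, and fix a family {f_α ∈ ω^ω : α < ω₁} such that for every g ∈ ω^ω there exists α < ω₁ with f_α(n) > g(n) for infinitely many n. For each α < ω₁ set G_α = {(a(n,m), x(α,m)) : m ≤ f_α(n), n ∈ ω} ⊆ S_ω × S_{ω₁}. Then each G_α is clopen in S_ω × S_{ω₁}, the family {G_α : α < ω₁} is compact-finite, and the point (a₀, ∞) lies in the closure of the union ⋃_{α<ω₁} G_α; hence {G_α} is not locally finite at (a₀, ∞). -/

import Mathlib

open Set Filter Topology Cardinal

/-- The sequential fan with spokes indexed by `κ`: underlying set is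
`Option (κ × ℕ)`, with `none` the apex and `some (α, n)` the `n`-th point
of the `α`-th spoke. -/
def Fan (κ : Type*) : Type _ := Option (κ × ℕ)

/-- The quotient topology on the fan: each point `some (α, n)` is isolated and
a set containing the apex is open iff it contains a tail of every spoke. -/
instance Fan.instTopologicalSpace (κ : Type*) : TopologicalSpace (Fan κ) where
  IsOpen s := (none : Option (κ × ℕ)) ∈ s → ∀ α : κ, {n : ℕ | (some (α, n) : Option (κ × ℕ)) ∉ s}.Finite
  isOpen_univ := by intro _ α; exact Set.finite_empty.subset (fun n hn => hn (Set.mem_univ _))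
  isOpen_inter := by
    intro s t hs ht hmem α
    refine ((hs hmem.1 α).union (ht hmem.2 α)).subset ?_
    intro n hn
    by_contra h
    simp only [Set.mem_union, Set.mem_setOf_eq] at h
    push_neg at h
    exact hn ⟨h.1, h.2⟩
  isOpen_sUnion := by
    intro S hS hmem α
    obtain ⟨s, hsS, hs⟩ := hmem
    refine (hS s hsS hs α).subset ?_
    intro n hn hns
    exact hn (Set.mem_sUnion.2 ⟨s, hsS, hns⟩)

/-- The apex of the sequential fan. -/
def Fan.apex {κ : Type*} : Fan κ := (none : Option (κ × ℕ))

/-- The `n`-th point of the `α`-th spoke of the sequential fan. -/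
def Fan.pt {κ : Type*} (α : κ) (n : ℕ) : Fan κ := (some (α, n) : Option (κ × ℕ))

lemma Fan.isOpen_iff {κ : Type*} {s : Set (Fan κ)} :
    IsOpen s ↔ ((Fan.apex : Fan κ) ∈ s → ∀ α : κ, {n : ℕ | Fan.pt α n ∉ s}.Finite) := Iff.rfl

lemma Fan.pt_ne_apex {κ : Type*} (α : κ) (n : ℕ) : (Fan.pt α n : Fan κ) ≠ Fan.apex :=
  fun h => Option.some_ne_none _ h

lemma Fan.pt_inj {κ : Type*} {α β : κ} {n m : ℕ} (h : (Fan.pt α n : Fan κ) = Fan.pt β m) :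
    α = β ∧ n = m := by
  have := Option.some_injective _ h
  exact ⟨congrArg Prod.fst this, congrArg Prod.snd this⟩

lemma Fan.isOpen_singleton {κ : Type*} (α : κ) (n : ℕ) : IsOpen ({Fan.pt α n} : Set (Fan κ)) := by
  rw [Fan.isOpen_iff]
  intro h
  exact absurd h.symm (Fan.pt_ne_apex α n)

lemma Fan.isOpen_compl_singleton {κ : Type*} (α : κ) (m : ℕ) :
    IsOpen ({Fan.pt α m}ᶜ : Set (Fan κ)) := by
  rw [Fan.isOpen_iff]
  intro _ β
  refine (Set.finite_singleton m).subset ?_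
  intro k hk
  simp only [Set.mem_setOf_eq, Set.mem_compl_iff, not_not, Set.mem_singleton_iff] at hk
  exact Set.mem_singleton_iff.2 (Fan.pt_inj hk).2

lemma Fan.exists_tail {κ : Type*} {s : Set (Fan κ)} (hs : s ∈ 𝓝 (Fan.apex : Fan κ)) :
    ∃ h : κ → ℕ, ∀ β m, h β ≤ m → (Fan.pt β m : Fan κ) ∈ s := by
  obtain ⟨t, hts, hto, hmem⟩ := mem_nhds_iff.mp hs
  have key : ∀ β : κ, ∃ N, ∀ m, N ≤ m → (Fan.pt β m : Fan κ) ∈ t := by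
    intro β
    have hfin := (Fan.isOpen_iff.mp hto) hmem β
    obtain ⟨N, hN⟩ := hfin.bddAbove
    refine ⟨N + 1, fun m hm => ?_⟩
    by_contra hmt
    have := hN hmt
    omega
  choose h hh using key
  exact ⟨h, fun β m hm => hts (hh β m hm)⟩

lemma exists_meet {ι : Type} (f : ι → ℕ → ℕ)
    (hf : ∀ g : ℕ → ℕ, ∃ α : ι, {n : ℕ | g n < f α n}.Infinite)
    (g : ℕ → ℕ) (h : ι → ℕ) (F : Finset ι) :
    ∃ α ∉ F, ∃ n m : ℕ, m ≤ f α n ∧ g n ≤ m ∧ h α ≤ m := by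
  obtain ⟨α, hI⟩ := hf (fun n => max (max (g n) n) (F.sup (fun β => f β n)))
  obtain ⟨n, hnI, hn⟩ := hI.exists_gt (h α)
  simp only [Set.mem_setOf_eq] at hnI
  have h1 : g n < f α n := lt_of_le_of_lt ((le_max_left _ _).trans (le_max_left _ _)) hnI
  have h2 : n < f α n := lt_of_le_of_lt ((le_max_right _ _).trans (le_max_left _ _)) hnI
  refine ⟨α, ?_, n, max (g n) (h α), ?_, le_max_left _ _, le_max_right _ _⟩
  · intro hαF
    have hle : f α n ≤ max (max (g n) n) (F.sup fun β => f β n) :=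
      (Finset.le_sup (f := fun β => f β n) hαF).trans
        (le_max_right (max (g n) n) (F.sup fun β => f β n))
    exact absurd (lt_of_le_of_lt hle hnI) (lt_irrefl _)
  · exact max_le h1.le (hn.le.trans h2.le)

/-- Given an `ω₁`-indexed family of functions witnessing `𝔟 ≤ ω₁`, the sets
`G_α = {(a(n,m), x(α,m)) : m ≤ f_α(n)}` are clopen in `S_ω × S_{ω₁}`, the family
`{G_α}` is compact-finite, and `(a₀, ∞)` lies in the closure of `⋃ G_α`; hence
`{G_α}` is not locally finite at `(a₀, ∞)`. -/
theorem fan_product_clopen_fan (ι : Type) (hι : #ι = aleph 1)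
    (f : ι → ℕ → ℕ)
    (hf : ∀ g : ℕ → ℕ, ∃ α : ι, {n : ℕ | g n < f α n}.Infinite)
    (G : ι → Set (Fan ℕ × Fan ι))
    (hG : ∀ α, G α = {p | ∃ n m : ℕ, m ≤ f α n ∧ p = (Fan.pt n m, Fan.pt α m)}) :
    (∀ α, IsClopen (G α)) ∧
    (∀ K : Set (Fan ℕ × Fan ι), IsCompact K → {α : ι | (G α ∩ K).Nonempty}.Finite) ∧
    ((Fan.apex, Fan.apex) ∈ closure (⋃ α, G α)) ∧
    ¬ ∃ V ∈ 𝓝 (((Fan.apex : Fan ℕ), (Fan.apex : Fan ι))),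
        {α : ι | (G α ∩ V).Nonempty}.Finite := by
  -- Openness
  have hopen : ∀ α, IsOpen (G α) := by
    intro α
    rw [isOpen_iff_mem_nhds]
    intro p hp
    rw [hG] at hp
    obtain ⟨n, m, hm, rfl⟩ := hp
    rw [mem_nhds_prod_iff]
    refine ⟨{Fan.pt n m}, (Fan.isOpen_singleton n m).mem_nhds rfl,
      {Fan.pt α m}, (Fan.isOpen_singleton α m).mem_nhds rfl, ?_⟩
    rintro ⟨a, b⟩ ⟨ha, hb⟩
    simp only [Set.mem_singleton_iff] at ha hb
    rw [hG]
    exact ⟨n, m, hm, by rw [ha, hb]⟩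
  -- Closedness
  have hclosed : ∀ α, IsClosed (G α) := by
    intro α
    rw [← isOpen_compl_iff, isOpen_iff_mem_nhds]
    rintro ⟨x, y⟩ hp
    rw [mem_nhds_prod_iff]
    match x with
    | none =>
      refine ⟨{q : Fan ℕ | ∀ n m : ℕ, m ≤ f α n → q ≠ Fan.pt n m}, ?_, Set.univ, univ_mem, ?_⟩
      · refine IsOpen.mem_nhds ?_ (fun n m _ h => Fan.pt_ne_apex n m h.symm)
        rw [Fan.isOpen_iff]
        intro _ n
        refine (Set.finite_Iic (f α n)).subset ?_
        intro k hk
        simp only [Set.mem_setOf_eq] at hk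
        push_neg at hk
        obtain ⟨n', m', hm', he⟩ := hk
        obtain ⟨rfl, rfl⟩ := Fan.pt_inj he
        exact hm'
      · rintro ⟨a, b⟩ ⟨ha, -⟩ hmem
        rw [hG] at hmem
        obtain ⟨n, m, hm, he⟩ := hmem
        exact ha n m hm (congrArg Prod.fst he)
    | some q =>
      obtain ⟨n, m⟩ := q
      by_cases hm : m ≤ f α n
      · have hy : y ≠ Fan.pt α m := by
          intro he
          exact hp (by rw [hG]; exact ⟨n, m, hm, by rw [he]; rfl⟩)
        refine ⟨{Fan.pt n m}, (Fan.isOpen_singleton n m).mem_nhds rfl,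
          {Fan.pt α m}ᶜ, (Fan.isOpen_compl_singleton α m).mem_nhds hy, ?_⟩
        rintro ⟨a, b⟩ ⟨ha, hb⟩ hmem
        rw [hG] at hmem
        obtain ⟨n', m', hm', he⟩ := hmem
        simp only [Set.mem_singleton_iff] at ha
        have ha' : (Fan.pt n' m' : Fan ℕ) = Fan.pt n m := by
          rw [← ha]; exact (congrArg Prod.fst he).symm
        obtain ⟨rfl, rfl⟩ := Fan.pt_inj ha'
        exact hb (congrArg Prod.snd he)
      · refine ⟨{Fan.pt n m}, (Fan.isOpen_singleton n m).mem_nhds rfl, Set.univ, univ_mem, ?_⟩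
        rintro ⟨a, b⟩ ⟨ha, -⟩ hmem
        rw [hG] at hmem
        obtain ⟨n', m', hm', he⟩ := hmem
        simp only [Set.mem_singleton_iff] at ha
        have ha' : (Fan.pt n' m' : Fan ℕ) = Fan.pt n m := by
          rw [← ha]; exact (congrArg Prod.fst he).symm
        obtain ⟨rfl, rfl⟩ := Fan.pt_inj ha'
        exact hm hm'
  refine ⟨fun α => ⟨hclosed α, hopen α⟩, ?_, ?_, ?_⟩
  -- compact-finite
  · intro K hK
    set S := {α : ι | (G α ∩ K).Nonempty} with hS
    have key : ∀ α ∈ S, ∃ m : ℕ, (Fan.pt α m : Fan ι) ∈ Prod.snd '' K := by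
      intro α hα
      obtain ⟨p, hpG, hpK⟩ := hα
      rw [hG] at hpG
      obtain ⟨n, m, hm, rfl⟩ := hpG
      exact ⟨m, ⟨_, hpK, rfl⟩⟩
    choose! m hm using key
    set D := (fun α => (Fan.pt α (m α) : Fan ι)) '' S with hD
    have hK2 : IsCompact (Prod.snd '' K) := hK.image continuous_snd
    have hDsub : D ⊆ Prod.snd '' K := by
      rintro _ ⟨α, hα, rfl⟩
      exact hm α hα
    have hDclosed : IsClosed D := by
      rw [← isOpen_compl_iff, Fan.isOpen_iff]
      intro _ β
      refine (Set.finite_singleton (m β)).subset ?_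
      intro k hk
      simp only [Set.mem_setOf_eq, Set.mem_compl_iff, not_not] at hk
      obtain ⟨γ, hγ, he⟩ := hk
      obtain ⟨rfl, rfl⟩ := Fan.pt_inj he.symm
      rfl
    have hDcompact : IsCompact D := hK2.of_isClosed_subset hDclosed hDsub
    have hDfin : D.Finite := by
      obtain ⟨t, ht⟩ := hDcompact.elim_finite_subcover
        (fun p : ι × ℕ => ({Fan.pt p.1 p.2} : Set (Fan ι)))
        (fun p => Fan.isOpen_singleton p.1 p.2)
        (by rintro _ ⟨α, hα, rfl⟩; exact Set.mem_iUnion.2 ⟨(α, m α), rfl⟩)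
      refine Set.Finite.subset (t.finite_toSet.biUnion (fun p _ => Set.finite_singleton _)) ht
    have hinj : Set.InjOn (fun α => (Fan.pt α (m α) : Fan ι)) S := by
      intro a _ b _ he
      exact (Fan.pt_inj he).1
    exact Set.Finite.of_finite_image (hD ▸ hDfin) hinj
  -- closure
  · rw [mem_closure_iff_nhds]
    intro t ht
    rw [mem_nhds_prod_iff] at ht
    obtain ⟨u, hu, v, hv, huv⟩ := ht
    obtain ⟨g, hg⟩ := Fan.exists_tail hu
    obtain ⟨h, hh⟩ := Fan.exists_tail hv
    obtain ⟨α, -, n, mm, h1, h2, h3⟩ := exists_meet f hf g h ∅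
    refine ⟨(Fan.pt n mm, Fan.pt α mm), huv ⟨hg n mm h2, hh α mm h3⟩, ?_⟩
    exact Set.mem_iUnion.2 ⟨α, by rw [hG]; exact ⟨n, mm, h1, rfl⟩⟩
  -- not locally finite
  · rintro ⟨V, hV, hFin⟩
    rw [mem_nhds_prod_iff] at hV
    obtain ⟨u, hu, v, hv, huv⟩ := hV
    obtain ⟨g, hg⟩ := Fan.exists_tail hu
    obtain ⟨h, hh⟩ := Fan.exists_tail hv
    obtain ⟨α, hαF, n, mm, h1, h2, h3⟩ := exists_meet f hf g h hFin.toFinset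
    apply hαF
    rw [Set.Finite.mem_toFinset]
    refine ⟨(Fan.pt n mm, Fan.pt α mm), ?_, huv ⟨hg n mm h2, hh α mm h3⟩⟩
    rw [hG]; exact ⟨n, mm, h1, rfl⟩
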